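/- Nesting of descendants in the persistence hierarchy: on a combinatorial surface, if the persistence pair (σ,τ) is a descendant of the persistence pair (σ̃,τ̃) in the persistence hierarchy, then σ̃ ≺ σ ≺ τ ≺ τ̃ in the consistent total order. -/

import Mathlib

open Classical

variable {Cell : Type}

/-- A discrete vector field: a set of pairs (σ,τ) with σ a facet of τ,
each cell occurring in at most one pair. -/
def IsVectorField (facet : Cell → Cell → Prop) (V : Set (Cell × Cell)) : Prop :=
  (∀ p ∈ V, facet p.1 p.2) ∧
  ∀ p ∈ V, ∀ q ∈ V, (p.1 = q.1 ∨ p.1 = q.2 ∨ p.2 = q.1 ∨ p.2 = q.2) → p = q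

/-- The covering relation ←_V : `covRel facet V x y` means x ←_V y. -/
def covRel (facet : Cell → Cell → Prop) (V : Set (Cell × Cell)) (x y : Cell) : Prop :=
  (facet x y ∧ (x, y) ∉ V) ∨ (y, x) ∈ V

/-- The strict partial order ≺_V induced by V: transitive closure of ←_V. -/
def indOrder (facet : Cell → Cell → Prop) (V : Set (Cell × Cell)) : Cell → Cell → Prop :=
  Relation.TransGen (covRel facet V)

/-- The reflexive closure ⪯_V of ≺_V. -/
def indOrderLe (facet : Cell → Cell → Prop) (V : Set (Cell × Cell)) : Cell → Cell → Prop :=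
  Relation.ReflTransGen (covRel facet V)

/-- A V-path (σ₀,τ₀,σ₁,…,τ_{r-1},σ_r), encoded by its first cell σ₀ and the
list of pairs (τ_i, σ_{i+1}). -/
def IsVPath (facet : Cell → Cell → Prop) (V : Set (Cell × Cell)) :
    Cell → List (Cell × Cell) → Prop
  | _, [] => True
  | σ, (τ, σ') :: rest => (σ, τ) ∈ V ∧ facet σ' τ ∧ (σ', τ) ∉ V ∧ IsVPath facet V σ' rest

/-- The last cell σ_r of a V-path. -/
def pathLast (σ : Cell) (l : List (Cell × Cell)) : Cell :=
  (l.getLast?.map Prod.snd).getD σ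

/-- No nontrivial closed V-paths. -/
def NoClosedVPath (facet : Cell → Cell → Prop) (V : Set (Cell × Cell)) : Prop :=
  ∀ σ (l : List (Cell × Cell)), IsVPath facet V σ l → l ≠ [] → pathLast σ l ≠ σ

/-- A discrete gradient vector field. -/
def IsGradient (facet : Cell → Cell → Prop) (V : Set (Cell × Cell)) : Prop :=
  IsVectorField facet V ∧ NoClosedVPath facet V

/-- A cell is critical if it belongs to no pair of V. -/
def IsCritical (V : Set (Cell × Cell)) (x : Cell) : Prop :=
  ∀ p ∈ V, p.1 ≠ x ∧ p.2 ≠ x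

/-- f is a discrete Morse function with gradient vector field V. -/
def IsMorse (facet : Cell → Cell → Prop) (V : Set (Cell × Cell)) (f : Cell → ℝ) : Prop :=
  ∀ σ τ, facet σ τ → (((σ, τ) ∉ V → f σ < f τ) ∧ ((σ, τ) ∈ V → f τ ≤ f σ))

/-- f is a discrete pseudo-Morse function consistent with V. -/
def IsPseudoMorse (facet : Cell → Cell → Prop) (V : Set (Cell × Cell)) (f : Cell → ℝ) : Prop :=
  ∀ σ τ, facet σ τ → (((σ, τ) ∉ V → f σ ≤ f τ) ∧ ((σ, τ) ∈ V → f τ ≤ f σ))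

/-- The pairs (σ_i, τ_i) of a V-path given by σ₀ and l = [(τ₀,σ₁),…]. -/
def oldPairs (σ0 : Cell) (l : List (Cell × Cell)) : List (Cell × Cell) :=
  List.zip (σ0 :: l.map Prod.snd) (l.map Prod.fst)

/-- The reversed pairs (σ_{i+1}, τ_i) of a V-path. -/
def newPairs (l : List (Cell × Cell)) : List (Cell × Cell) :=
  l.map (fun p => (p.2, p.1))

/-- Reversal of V along the V-path from σ₀ ∈ ∂ρ given by l (Forman cancelation). -/
def reverseField (V : Set (Cell × Cell)) (ρ σ0 : Cell) (l : List (Cell × Cell)) :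
    Set (Cell × Cell) :=
  (V \ {p : Cell × Cell | p ∈ oldPairs σ0 l}) ∪ {p : Cell × Cell | p ∈ newPairs l} ∪ {(σ0, ρ)}

/-- A combinatorial surface (closed): facets raise dimension by one, dimensions are ≤ 2,
every 1-cell has exactly two boundary 0-cells and is a facet of exactly two 2-cells. -/
def IsCombSurface (dim : Cell → ℕ) (facet : Cell → Cell → Prop) : Prop :=
  (∀ σ τ, facet σ τ → dim τ = dim σ + 1) ∧
  (∀ x, dim x ≤ 2) ∧
  (∀ τ, dim τ = 1 → ∃ a b, a ≠ b ∧ ∀ x, facet x τ ↔ (x = a ∨ x = b)) ∧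
  (∀ τ, dim τ = 1 → ∃ A B, A ≠ B ∧ ∀ X, facet τ X ↔ (X = A ∨ X = B))

/-- Membership in the order subcomplex K(ρ) (cells ⪯ ρ together with their faces). -/
def SubAt (facet : Cell → Cell → Prop) (lt : Cell → Cell → Prop) (ρ σ : Cell) : Prop :=
  (σ = ρ ∨ lt σ ρ) ∨ ∃ τ, (τ = ρ ∨ lt τ ρ) ∧ Relation.TransGen facet σ τ

/-- Membership in the order subcomplex K(ρ₋) (cells strictly before ρ with their faces). -/
def SubBefore (facet : Cell → Cell → Prop) (lt : Cell → Cell → Prop) (ρ σ : Cell) : Prop :=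
  lt σ ρ ∨ ∃ τ, lt τ ρ ∧ Relation.TransGen facet σ τ

/-- Connectivity of 0-cells through 1-cells inside a subcomplex `sub`. -/
def ConnIn (dim : Cell → ℕ) (facet : Cell → Cell → Prop) (sub : Cell → Prop) :
    Cell → Cell → Prop :=
  Relation.ReflTransGen (fun x y => ∃ e, dim e = 1 ∧ sub e ∧ facet x e ∧ facet y e)

/-- c is the creator (the ≺-minimal 0-cell) of the connected component of a
in the subcomplex `sub`. -/
def CreatorOf (dim : Cell → ℕ) (facet : Cell → Cell → Prop) (lt : Cell → Cell → Prop)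
    (sub : Cell → Prop) (c a : Cell) : Prop :=
  dim c = 0 ∧ ConnIn dim facet sub c a ∧
    ∀ b, dim b = 0 → ConnIn dim facet sub b a → ¬ lt b c

/-- (σ,τ) is a persistence pair of dimension (0,1): the negative 1-cell τ merges two
components of K(τ₋); σ is the younger of the two creators. -/
def PersPair01 (dim : Cell → ℕ) (facet : Cell → Cell → Prop) (lt : Cell → Cell → Prop)
    (σ τ : Cell) : Prop :=
  dim σ = 0 ∧ dim τ = 1 ∧ lt σ τ ∧
  ∃ a b, facet a τ ∧ facet b τ ∧ a ≠ b ∧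
    ¬ ConnIn dim facet (SubBefore facet lt τ) a b ∧
    CreatorOf dim facet lt (SubBefore facet lt τ) σ a ∧
    ∃ c, CreatorOf dim facet lt (SubBefore facet lt τ) c b ∧ lt c σ

/-- (σ,τ) is a persistence pair of dimension (1,2), defined via the dual complex. -/
def PersPair12 (dim : Cell → ℕ) (facet : Cell → Cell → Prop) (lt : Cell → Cell → Prop)
    (σ τ : Cell) : Prop :=
  PersPair01 (fun x => 2 - dim x) (fun x y => facet y x) (fun x y => lt y x) τ σ

/-- (σ,τ) is a persistence pair (on a surface: of dimension (0,1) or (1,2)). -/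
def PersPair (dim : Cell → ℕ) (facet : Cell → Cell → Prop) (lt : Cell → Cell → Prop)
    (σ τ : Cell) : Prop :=
  PersPair01 dim facet lt σ τ ∨ PersPair12 dim facet lt σ τ

/-- lt is a strict total order consistent with (f, V). -/
def ConsistentOrder (facet : Cell → Cell → Prop) (V : Set (Cell × Cell)) (f : Cell → ℝ)
    (lt : Cell → Cell → Prop) : Prop :=
  IsStrictTotalOrder Cell lt ∧ (∀ a b, f a < f b → lt a b) ∧
    ∀ a b, indOrder facet V a b → lt a b

/-- One step of a persistence cancelation sequence: cancel the pair of critical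
cells (σ,τ) of V by reversing V along the unique V-path from ∂τ to σ. -/
def CancelStep (facet : Cell → Cell → Prop) (V V' : Set (Cell × Cell)) (σ τ : Cell) : Prop :=
  IsCritical V σ ∧ IsCritical V τ ∧
  ∃ σ0 l, facet σ0 τ ∧ IsVPath facet V σ0 l ∧ pathLast σ0 l = σ ∧
    (∀ σ0' l', facet σ0' τ → IsVPath facet V σ0' l' → pathLast σ0' l' = σ →
      σ0' = σ0 ∧ l' = l) ∧
    V' = reverseField V τ σ0 l

/-- q = (σ̃,τ̃) is the parent of p = (σ,τ) in the persistence hierarchy: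
for (0,1)-pairs, σ̃ creates the component of K(τ) into which [σ] gets merged by τ;
for (1,2)-pairs, dually on the dual complex. -/
def ParentPair (dim : Cell → ℕ) (facet : Cell → Cell → Prop) (lt : Cell → Cell → Prop)
    (p q : Cell × Cell) : Prop :=
  (PersPair01 dim facet lt p.1 p.2 ∧ PersPair01 dim facet lt q.1 q.2 ∧
    CreatorOf dim facet lt (SubAt facet lt p.2) q.1 p.1) ∨
  (PersPair12 dim facet lt p.1 p.2 ∧ PersPair12 dim facet lt q.1 q.2 ∧
    CreatorOf (fun x => 2 - dim x) (fun x y => facet y x) (fun x y => lt y x)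
      (SubAt (fun x y => facet y x) (fun x y => lt y x) p.1) q.2 p.2)

/-- p is a descendant of q in the persistence hierarchy. -/
def DescendantPair (dim : Cell → ℕ) (facet : Cell → Cell → Prop) (lt : Cell → Cell → Prop) :
    (Cell × Cell) → (Cell × Cell) → Prop :=
  Relation.TransGen (ParentPair dim facet lt)

lemma connIn_symm (dim : Cell → ℕ) (facet : Cell → Cell → Prop) (sub : Cell → Prop)
    {x y : Cell} (h : ConnIn dim facet sub x y) : ConnIn dim facet sub y x := by
  have hs : Symmetric (fun x y => ∃ e, dim e = 1 ∧ sub e ∧ facet x e ∧ facet y e) := by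
    rintro a b ⟨e, h1, h2, h3, h4⟩; exact ⟨e, h1, h2, h4, h3⟩
  haveI : Std.Symm (fun x y : Cell => ∃ e, dim e = 1 ∧ sub e ∧ facet x e ∧ facet y e) := ⟨fun a b hab => hs hab⟩
  exact (Relation.ReflTransGen.stdSymm (r := fun x y : Cell => ∃ e, dim e = 1 ∧ sub e ∧ facet x e ∧ facet y e)).symm _ _ h

lemma connIn_mono (dim : Cell → ℕ) (facet : Cell → Cell → Prop) {s1 s2 : Cell → Prop}
    (hs : ∀ e, s1 e → s2 e) {x y : Cell} (h : ConnIn dim facet s1 x y) :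
    ConnIn dim facet s2 x y := by
  refine Relation.ReflTransGen.mono ?_ x y h
  rintro a b ⟨e, h1, h2, h3, h4⟩; exact ⟨e, h1, hs e h2, h3, h4⟩

lemma dualSTO (lt : Cell → Cell → Prop) (h : IsStrictTotalOrder Cell lt) :
    IsStrictTotalOrder Cell (fun x y => lt y x) where
  trichotomous a b := by
    rcases trichotomous_of lt a b with h1 | h1 | h1
    · exact fun _ h2 => absurd h1 h2
    · exact fun _ _ => h1
    · exact fun h2 _ => absurd h1 h2
  irrefl a := h.irrefl a
  trans a b c hab hbc := h.trans _ _ _ hbc hab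

lemma step01 (dim : Cell → ℕ) (facet lt : Cell → Cell → Prop)
    (hlt : IsStrictTotalOrder Cell lt) {σ τ σ' τ' : Cell}
    (hp : PersPair01 dim facet lt σ τ) (hq : PersPair01 dim facet lt σ' τ')
    (hc : CreatorOf dim facet lt (SubAt facet lt τ) σ' σ) :
    lt σ' σ ∧ lt σ τ ∧ lt τ τ' := by
  obtain ⟨hdσ, hdτ, hστ, a, b, haτ, hbτ, hab, hnab, hca, c, hcc, hcσ⟩ := hp
  obtain ⟨hdσ2, hconn, hmin⟩ := hc
  have hsub1 : ∀ e, SubBefore facet lt τ e → SubAt facet lt τ e := by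
    intro e he
    rcases he with h | ⟨ρ, h1, h2⟩
    · exact Or.inl (Or.inr h)
    · exact Or.inr ⟨ρ, Or.inr h1, h2⟩
  have hedgeτ : SubAt facet lt τ τ := Or.inl (Or.inl rfl)
  have hba : ConnIn dim facet (SubAt facet lt τ) b a :=
    Relation.ReflTransGen.single ⟨τ, hdτ, hedgeτ, hbτ, haτ⟩
  have hcb : ConnIn dim facet (SubAt facet lt τ) c b :=
    connIn_mono dim facet hsub1 hcc.2.1
  have haσ : ConnIn dim facet (SubAt facet lt τ) a σ :=
    connIn_symm dim facet _ (connIn_mono dim facet hsub1 hca.2.1)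
  have hcσconn : ConnIn dim facet (SubAt facet lt τ) c σ := (hcb.trans hba).trans haσ
  have h1 : lt σ' σ := by
    have hncσ' : ¬ lt c σ' := hmin c hcc.1 hcσconn
    rcases trichotomous_of lt c σ' with h | h | h
    · exact absurd h hncσ'
    · rw [← h]; exact hcσ
    · exact hlt.trans _ _ _ h hcσ
  refine ⟨h1, hστ, ?_⟩
  by_contra hne
  obtain ⟨hdσ', hdτ', hσ'τ', a', b', ha', hb', hab', hnab', hca', c', hcc', hc'σ'⟩ := hq
  have hττ' : τ' = τ ∨ lt τ' τ := by
    rcases trichotomous_of lt τ τ' with h | h | h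
    · exact absurd h hne
    · exact Or.inl h.symm
    · exact Or.inr h
  have hτ'lt : ∀ e, lt e τ' → lt e τ := by
    intro e he
    rcases hττ' with h | h
    · rw [← h]; exact he
    · exact hlt.trans _ _ _ he h
  have hsub2 : ∀ e, SubBefore facet lt τ' e → SubAt facet lt τ e := by
    intro e he
    rcases he with h | ⟨ρ, h1, h2⟩
    · exact Or.inl (Or.inr (hτ'lt e h))
    · exact Or.inr ⟨ρ, Or.inr (hτ'lt ρ h1), h2⟩
  have hτ'sub : SubAt facet lt τ τ' := Or.inl hττ'
  have hb'a' : ConnIn dim facet (SubAt facet lt τ) b' a' :=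
    Relation.ReflTransGen.single ⟨τ', hdτ', hτ'sub, hb', ha'⟩
  have hc'b' : ConnIn dim facet (SubAt facet lt τ) c' b' :=
    connIn_mono dim facet hsub2 hcc'.2.1
  have ha'σ' : ConnIn dim facet (SubAt facet lt τ) a' σ' :=
    connIn_symm dim facet _ (connIn_mono dim facet hsub2 hca'.2.1)
  have hc'σ : ConnIn dim facet (SubAt facet lt τ) c' σ :=
    ((hc'b'.trans hb'a').trans ha'σ').trans hconn
  exact hmin c' hcc'.1 hc'σ hc'σ'

lemma parent_step (dim : Cell → ℕ) (facet lt : Cell → Cell → Prop)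
    (hlt : IsStrictTotalOrder Cell lt) {p q : Cell × Cell}
    (h : ParentPair dim facet lt p q) :
    lt q.1 p.1 ∧ lt p.1 p.2 ∧ lt p.2 q.2 := by
  rcases h with ⟨hp, hq, hc⟩ | ⟨hp, hq, hc⟩
  · exact step01 dim facet lt hlt hp hq hc
  · obtain ⟨h1, h2, h3⟩ :=
      step01 (fun x => 2 - dim x) (fun x y => facet y x) (fun x y => lt y x)
        (dualSTO lt hlt) hp hq hc
    exact ⟨h3, h2, h1⟩

/-- on a combinatorial surface, a descendant (σ,τ) of a persistence pair
(σ̃,τ̃) in the persistence hierarchy is nested in it: σ̃ ≺ σ ≺ τ ≺ τ̃. -/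
theorem stmt15 [Fintype Cell] (dim : Cell → ℕ) (facet : Cell → Cell → Prop)
    (hsurf : IsCombSurface dim facet)
    (V : Set (Cell × Cell)) (hV : IsGradient facet V)
    (f : Cell → ℝ) (hf : IsPseudoMorse facet V f)
    (lt : Cell → Cell → Prop) (hlt : ConsistentOrder facet V f lt)
    (p q : Cell × Cell) (h : DescendantPair dim facet lt p q) :
    lt q.1 p.1 ∧ lt p.1 p.2 ∧ lt p.2 q.2 := by
  have hsto : IsStrictTotalOrder Cell lt := hlt.1
  induction h with
  | single h => exact parent_step dim facet lt hsto h
  | tail _ h2 ih =>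
    obtain ⟨i1, i2, i3⟩ := ih
    obtain ⟨j1, j2, j3⟩ := parent_step dim facet lt hsto h2
    exact ⟨hsto.trans _ _ _ j1 i1, i2, hsto.trans _ _ _ i3 j3⟩
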